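/- Let n ≥ 2 and μ ∈ [0,1). With H the Hamiltonian of the circular restricted three body problem and U the effective potential on ℝⁿ \ {E,M}, a point (q,p) with q ∈ ℝⁿ \ {E,M} is a critical point of H (i.e. the Fréchet derivative of H vanishes at (q,p)) if and only if q is a critical point of U and p = (−q₂, q₁, 0, …, 0). In particular, the footpoint projection (q,p) ↦ q restricts to a bijection between the critical points of H and the critical points of U. -/

import Mathlib

/-- The position of the earth, `E = μe₁`, in `ℝⁿ` (here the dimension is `n + 2 ≥ 2`,
with `0`-based coordinates). -/
noncomputable def earthPos (n : ℕ) (μ : ℝ) : EuclideanSpace ℝ (Fin (n + 2)) :=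
  EuclideanSpace.single 0 μ

/-- The position of the moon, `M = −(1−μ)e₁`. -/
noncomputable def moonPos (n : ℕ) (μ : ℝ) : EuclideanSpace ℝ (Fin (n + 2)) :=
  EuclideanSpace.single 0 (-(1 - μ))

/-- The Hamiltonian of the circular restricted three body problem in rotating
coordinates, as a function of `(q, p)`. -/
noncomputable def threeBodyH (n : ℕ) (μ : ℝ)
    (x : EuclideanSpace ℝ (Fin (n + 2)) × EuclideanSpace ℝ (Fin (n + 2))) : ℝ :=
  (1 / 2) * ‖x.2‖ ^ 2 - (1 - μ) / ‖x.1 - earthPos n μ‖ - μ / ‖x.1 - moonPos n μ‖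
    + (x.2 0 * x.1 1 - x.2 1 * x.1 0)

/-- The effective potential
`U(q) = −(1−μ)/|q−E| − μ/|q−M| − (1/2)(q₁² + q₂²)`. -/
noncomputable def effPotential (n : ℕ) (μ : ℝ)
    (q : EuclideanSpace ℝ (Fin (n + 2))) : ℝ :=
  -((1 - μ) / ‖q - earthPos n μ‖) - μ / ‖q - moonPos n μ‖ - (1 / 2) * (q 0 ^ 2 + q 1 ^ 2)


open ContinuousLinearMap

noncomputable section

variable (n : ℕ)

abbrev Esp (n : ℕ) := EuclideanSpace ℝ (Fin (n + 2))

/-- rot map A q = q₁ • e₀ − q₀ • e₁ -/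
def rotA : Esp n →L[ℝ] Esp n :=
  (EuclideanSpace.proj (1 : Fin (n+2))).smulRight (EuclideanSpace.single 0 (1:ℝ))
    - (EuclideanSpace.proj (0 : Fin (n+2))).smulRight (EuclideanSpace.single 1 (1:ℝ))

def Lmap : Esp n × Esp n →L[ℝ] Esp n :=
  ContinuousLinearMap.snd ℝ (Esp n) (Esp n) + (rotA n).comp (ContinuousLinearMap.fst ℝ _ _)

lemma one_ne_zero_fin : (1 : Fin (n+2)) ≠ 0 := by
  simp [Fin.ext_iff]

lemma Lmap_apply (x : Esp n × Esp n) :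
    Lmap n x = x.2 + (x.1 1 • EuclideanSpace.single 0 (1:ℝ) - x.1 0 • EuclideanSpace.single 1 (1:ℝ)) := by
  simp [Lmap, rotA]

lemma Hsplit (μ : ℝ) (x : Esp n × Esp n) :
    threeBodyH n μ x = (1/2) * ‖Lmap n x‖^2 + effPotential n μ x.1 := by
  have h10 := one_ne_zero_fin n
  have h01 : (0 : Fin (n+2)) ≠ 1 := h10.symm
  rw [Lmap_apply, threeBodyH, effPotential, ← real_inner_self_eq_norm_sq,
    ← real_inner_self_eq_norm_sq]
  simp only [inner_add_left, inner_add_right, inner_sub_left, inner_sub_right,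
    real_inner_smul_left, real_inner_smul_right, EuclideanSpace.inner_single_left,
    EuclideanSpace.inner_single_right, PiLp.smul_apply, smul_eq_mul, EuclideanSpace.single_apply, RCLike.inner_apply,
    starRingEnd_apply, star_trivial, eq_self_iff_true, if_true, if_pos rfl, if_neg h10, if_neg h01]
  ring

lemma diff_U (μ : ℝ) {q : Esp n} (hE : q ≠ earthPos n μ) (hM : q ≠ moonPos n μ) :
    DifferentiableAt ℝ (effPotential n μ) q := by
  have hE0 : q - earthPos n μ ≠ 0 := sub_ne_zero.mpr hE
  have hM0 : q - moonPos n μ ≠ 0 := sub_ne_zero.mpr hM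
  have d1 : DifferentiableAt ℝ (fun q : Esp n => ‖q - earthPos n μ‖) q :=
    (differentiableAt_id.sub_const _).norm ℝ hE0
  have d2 : DifferentiableAt ℝ (fun q : Esp n => ‖q - moonPos n μ‖) q :=
    (differentiableAt_id.sub_const _).norm ℝ hM0
  have dq0 : DifferentiableAt ℝ (fun q : Esp n => q 0) q := by
    have h := ContinuousLinearMap.differentiableAt (𝕜 := ℝ) (x := q)
      (EuclideanSpace.proj (0 : Fin (n+2)))
    exact h
  have dq1 : DifferentiableAt ℝ (fun q : Esp n => q 1) q := by
    have h := ContinuousLinearMap.differentiableAt (𝕜 := ℝ) (x := q)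
      (EuclideanSpace.proj (1 : Fin (n+2)))
    exact h
  have t1 : DifferentiableAt ℝ (fun q : Esp n => -((1 - μ) / ‖q - earthPos n μ‖)) q := by
    simp only [div_eq_mul_inv]
    exact ((d1.inv (norm_ne_zero_iff.mpr hE0)).const_mul (1 - μ)).neg
  have t2 : DifferentiableAt ℝ (fun q : Esp n => μ / ‖q - moonPos n μ‖) q := by
    simp only [div_eq_mul_inv]
    exact (d2.inv (norm_ne_zero_iff.mpr hM0)).const_mul μ
  have t3 : DifferentiableAt ℝ (fun q : Esp n => (1/2 : ℝ) * (q 0 ^ 2 + q 1 ^ 2)) q :=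
    ((dq0.pow 2).add (dq1.pow 2)).const_mul _
  exact (t1.sub t2).sub t3

lemma hasFDeriv_H (μ : ℝ) {q p : Esp n} (hE : q ≠ earthPos n μ) (hM : q ≠ moonPos n μ) :
    HasFDerivAt (threeBodyH n μ)
      ((innerSL ℝ (Lmap n (q, p))).comp (Lmap n)
        + (fderiv ℝ (effPotential n μ) q).comp (ContinuousLinearMap.fst ℝ _ _)) (q, p) := by
  have h1 : HasFDerivAt (fun x : Esp n × Esp n => (1/2 : ℝ) * ‖Lmap n x‖^2)
      ((innerSL ℝ (Lmap n (q, p))).comp (Lmap n)) (q, p) := by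
    have h := ((Lmap n).hasFDerivAt (x := (q, p))).norm_sq.const_mul (1/2 : ℝ)
    have e : ((1:ℝ)/2) • ((2:ℕ) • ((innerSL ℝ (Lmap n (q, p))).comp (Lmap n)))
        = (innerSL ℝ (Lmap n (q, p))).comp (Lmap n) := by
      rw [← Nat.cast_smul_eq_nsmul ℝ, smul_smul]
      norm_num
    rw [e] at h
    exact h
  have h2 : HasFDerivAt (fun x : Esp n × Esp n => effPotential n μ x.1)
      ((fderiv ℝ (effPotential n μ) q).comp (ContinuousLinearMap.fst ℝ _ _)) (q, p) :=
    ((diff_U n μ hE hM).hasFDerivAt).comp (f := Prod.fst) (q, p) hasFDerivAt_fst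
  have hfun : threeBodyH n μ
      = fun x => (1/2 : ℝ) * ‖Lmap n x‖^2 + effPotential n μ x.1 := funext (Hsplit n μ)
  rw [hfun]
  exact h1.add h2

lemma crit_iff (μ : ℝ) {q p : Esp n} (hE : q ≠ earthPos n μ) (hM : q ≠ moonPos n μ) :
    fderiv ℝ (threeBodyH n μ) (q, p) = 0
      ↔ (fderiv ℝ (effPotential n μ) q = 0 ∧ Lmap n (q, p) = 0) := by
  rw [(hasFDeriv_H n μ hE hM).fderiv]
  constructor
  · intro h
    have hL : Lmap n (q, p) = 0 := by
      have hL0 : Lmap n ((0 : Esp n), Lmap n (q, p)) = Lmap n (q, p) := by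
        rw [Lmap_apply]; simp
      have h0 := DFunLike.congr_fun h ((0 : Esp n), Lmap n (q, p))
      simp only [ContinuousLinearMap.add_apply, ContinuousLinearMap.comp_apply,
        ContinuousLinearMap.coe_fst', hL0, map_zero, add_zero, innerSL_apply_apply,
        ContinuousLinearMap.zero_apply] at h0
      exact inner_self_eq_zero.mp h0
    refine ⟨?_, hL⟩
    ext v
    have hv := DFunLike.congr_fun h (v, (0 : Esp n))
    simp only [ContinuousLinearMap.add_apply, ContinuousLinearMap.comp_apply,
      ContinuousLinearMap.coe_fst', hL, map_zero, innerSL_apply_apply, inner_zero_left,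
      zero_add, ContinuousLinearMap.zero_apply] at hv
    simpa using hv
  · rintro ⟨hU, hL⟩
    rw [hU, hL, map_zero]
    simp

lemma L_zero_iff (q p : Esp n) :
    Lmap n (q, p) = 0 ↔
      (p 0 = -q 1 ∧ p 1 = q 0 ∧ ∀ i : Fin (n + 2), 2 ≤ (i : ℕ) → p i = 0) := by
  have h10 := one_ne_zero_fin n
  rw [Lmap_apply]
  constructor
  · intro h
    have hi : ∀ i, p i + (q 1 * (if i = 0 then (1:ℝ) else 0)
        - q 0 * (if i = 1 then (1:ℝ) else 0)) = 0 := by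
      intro i
      have := congrArg (fun v : Esp n => v i) h
      simpa [PiLp.add_apply, PiLp.sub_apply, PiLp.smul_apply, smul_eq_mul,
        EuclideanSpace.single_apply] using this
    refine ⟨?_, ?_, ?_⟩
    · have := hi 0; simp [h10.symm] at this; linarith
    · have := hi 1; simp [h10] at this; linarith
    · intro i h2i
      have hne0 : i ≠ 0 := by
        intro hh; subst hh; simp at h2i
      have hne1 : i ≠ 1 := by
        intro hh; subst hh; simp [Fin.val_one] at h2i
      have := hi i; simpa [hne0, hne1] using this
  · rintro ⟨h0, h1, h2⟩
    ext i
    by_cases hi0 : i = 0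
    · subst hi0
      simp [PiLp.add_apply, PiLp.sub_apply, PiLp.smul_apply, smul_eq_mul,
        EuclideanSpace.single_apply, h10.symm, h0]
    by_cases hi1 : i = 1
    · subst hi1
      simp [PiLp.add_apply, PiLp.sub_apply, PiLp.smul_apply, smul_eq_mul,
        EuclideanSpace.single_apply, h10, h1]
    have h2i : 2 ≤ (i : ℕ) := by
      have v0 : (i : ℕ) ≠ 0 := by intro h; apply hi0; ext; simp [h]
      have v1 : (i : ℕ) ≠ 1 := by intro h; apply hi1; ext; simp [h, Fin.val_one]
      omega
    simp [PiLp.add_apply, PiLp.sub_apply, PiLp.smul_apply, smul_eq_mul,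
      EuclideanSpace.single_apply, hi0, hi1, h2 i h2i]

lemma fin_cases3 {i : Fin (n + 2)} (h0 : i ≠ 0) (h1 : i ≠ 1) : 2 ≤ (i : ℕ) := by
  have v0 : (i : ℕ) ≠ 0 := by intro h; apply h0; ext; simp [h]
  have v1 : (i : ℕ) ≠ 1 := by intro h; apply h1; ext; simp [h, Fin.val_one]
  omega

theorem critical_points_threeBodyH' (μ : ℝ) (hμ : μ ∈ Set.Ico (0 : ℝ) 1) :
    (∀ (q p : EuclideanSpace ℝ (Fin (n + 2))), q ≠ earthPos n μ → q ≠ moonPos n μ →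
      (fderiv ℝ (threeBodyH n μ) (q, p) = 0 ↔
        (fderiv ℝ (effPotential n μ) q = 0 ∧
          p 0 = -q 1 ∧ p 1 = q 0 ∧ ∀ i : Fin (n + 2), 2 ≤ (i : ℕ) → p i = 0))) ∧
    Set.BijOn (Prod.fst)
      {x : EuclideanSpace ℝ (Fin (n + 2)) × EuclideanSpace ℝ (Fin (n + 2)) |
        x.1 ≠ earthPos n μ ∧ x.1 ≠ moonPos n μ ∧ fderiv ℝ (threeBodyH n μ) x = 0}
      {q : EuclideanSpace ℝ (Fin (n + 2)) |
        q ≠ earthPos n μ ∧ q ≠ moonPos n μ ∧ fderiv ℝ (effPotential n μ) q = 0} := by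
  have h10 := one_ne_zero_fin n
  have main : ∀ (q p : Esp n), q ≠ earthPos n μ → q ≠ moonPos n μ →
      (fderiv ℝ (threeBodyH n μ) (q, p) = 0 ↔
        (fderiv ℝ (effPotential n μ) q = 0 ∧
          p 0 = -q 1 ∧ p 1 = q 0 ∧ ∀ i : Fin (n + 2), 2 ≤ (i : ℕ) → p i = 0)) := by
    intro q p hE hM
    rw [crit_iff n μ hE hM, L_zero_iff]
  refine ⟨main, ?_, ?_, ?_⟩
  · rintro ⟨q, p⟩ ⟨hE, hM, hc⟩
    exact ⟨hE, hM, ((main q p hE hM).mp hc).1⟩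
  · rintro ⟨q, p⟩ ⟨hE, hM, hc⟩ ⟨q', p'⟩ ⟨hE', hM', hc'⟩ hq
    obtain rfl : q = q' := hq
    obtain ⟨-, h0, h1, h2⟩ := (main q p hE hM).mp hc
    obtain ⟨-, h0', h1', h2'⟩ := (main q p' hE' hM').mp hc'
    have hp : p = p' := by
      ext i
      by_cases hi0 : i = 0
      · subst hi0; rw [h0, h0']
      by_cases hi1 : i = 1
      · subst hi1; rw [h1, h1']
      have h2i := fin_cases3 n hi0 hi1
      rw [h2 i h2i, h2' i h2i]
    rw [hp]
  · rintro q ⟨hE, hM, hU⟩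
    refine ⟨(q, EuclideanSpace.single 0 (-(q 1)) + EuclideanSpace.single 1 (q 0)),
      ⟨hE, hM, ?_⟩, rfl⟩
    apply (main q _ hE hM).mpr
    refine ⟨hU, ?_, ?_, ?_⟩
    · simp [PiLp.add_apply, EuclideanSpace.single_apply, h10.symm]
    · simp [PiLp.add_apply, EuclideanSpace.single_apply, h10]
    · intro i h2i
      have hi0 : i ≠ 0 := by rintro rfl; simp at h2i
      have hi1 : i ≠ 1 := by rintro rfl; simp [Fin.val_one] at h2i
      simp [PiLp.add_apply, EuclideanSpace.single_apply, hi0, hi1]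

end

/-- A point `(q,p)` is a critical point of the Hamiltonian `H` iff `q` is a critical
point of the effective potential `U` and `p = (−q₂, q₁, 0, …, 0)`; in particular the
footpoint projection restricts to a bijection between `crit H` and `crit U`. -/
theorem critical_points_threeBodyH (n : ℕ) (μ : ℝ) (hμ : μ ∈ Set.Ico (0 : ℝ) 1) :
    (∀ (q p : EuclideanSpace ℝ (Fin (n + 2))), q ≠ earthPos n μ → q ≠ moonPos n μ →
      (fderiv ℝ (threeBodyH n μ) (q, p) = 0 ↔
        (fderiv ℝ (effPotential n μ) q = 0 ∧
          p 0 = -q 1 ∧ p 1 = q 0 ∧ ∀ i : Fin (n + 2), 2 ≤ (i : ℕ) → p i = 0))) ∧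
    Set.BijOn (Prod.fst)
      {x : EuclideanSpace ℝ (Fin (n + 2)) × EuclideanSpace ℝ (Fin (n + 2)) |
        x.1 ≠ earthPos n μ ∧ x.1 ≠ moonPos n μ ∧ fderiv ℝ (threeBodyH n μ) x = 0}
      {q : EuclideanSpace ℝ (Fin (n + 2)) |
        q ≠ earthPos n μ ∧ q ≠ moonPos n μ ∧ fderiv ℝ (effPotential n μ) q = 0} := by
  exact critical_points_threeBodyH' n μ hμ
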